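/- There exists a constant c₀ > 0, independent of γ, such that for every γ > 0 and every p ∈ ℝ, lim_{B→0⁺} Φ_B(p) = −c₀·γ^{−3/2}·|p|^{3/2}. -/

import Mathlib

open Filter Topology MeasureTheory Set

namespace Stmt16

noncomputable def sq (B t : ℝ) : ℝ := Real.sqrt (t^2 + B^2/4)

variable {B ε : ℝ}

lemma sq_pos (hB : 0 < B) (t : ℝ) : 0 < sq B t := by
  apply Real.sqrt_pos.2; positivity

lemma sq_sq (hB : 0 < B) (t : ℝ) : (sq B t)^2 = t^2 + B^2/4 := by
  rw [sq, Real.sq_sqrt]; positivity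

lemma le_sq (hB : 0 < B) (t : ℝ) : t ≤ sq B t := by
  rcases le_total t 0 with h | h
  · exact h.trans (sq_pos hB t).le
  · have := sq_sq hB t
    nlinarith [sq_pos hB t]

lemma half_le_sq (hB : 0 < B) (t : ℝ) : B/2 ≤ sq B t := by
  have h := sq_sq hB t
  nlinarith [sq_pos hB t]

lemma sq_le (hB : 0 < B) {t : ℝ} (ht : 0 ≤ t) : sq B t ≤ t + B/2 := by
  have h := sq_sq hB t
  nlinarith [sq_pos hB t, hB]

lemma hasDerivAt_sq (hB : 0 < B) (t : ℝ) : HasDerivAt (sq B) (t / sq B t) t := by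
  have h1 : HasDerivAt (fun t : ℝ => t^2 + B^2/4) (2*t) t := by
    simpa using ((hasDerivAt_pow 2 t).add_const (B^2/4))
  have h2 : HasDerivAt Real.sqrt (1 / (2 * Real.sqrt (t^2+B^2/4))) (t^2+B^2/4) :=
    Real.hasDerivAt_sqrt (by positivity)
  have := h2.comp t h1
  refine this.congr_deriv ?_
  rw [sq]; field_simp

lemma continuous_sq (hB : 0 < B) : Continuous (sq B) :=
  continuous_iff_continuousAt.2 fun t => (hasDerivAt_sq hB t).continuousAt

noncomputable def f (B ε t : ℝ) : ℝ := (2 * Real.sqrt (t ^ 2 + B ^ 2 / 4) + ε * B) * t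

lemma f_eq (B ε t : ℝ) : f B ε t = (2 * sq B t + ε * B) * t := rfl

noncomputable def f' (B ε t : ℝ) : ℝ := 2 * sq B t + ε * B + 2 * t^2 / sq B t

lemma hasDerivAt_f (hB : 0 < B) (t : ℝ) : HasDerivAt (f B ε) (f' B ε t) t := by
  have h1 : HasDerivAt (fun t => 2 * sq B t + ε * B) (2 * (t / sq B t)) t :=
    ((hasDerivAt_sq hB t).const_mul 2).add_const _
  have h2 := h1.mul (hasDerivAt_id t)
  have : ∀ s, f B ε s = (2 * sq B s + ε * B) * id s := fun s => rfl
  simp only [id] at h2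
  refine h2.congr_deriv ?_
  have := (sq_pos hB t).ne'
  rw [f']; field_simp; ring

lemma f'_pos (hB : 0 < B) (hε : ε = 1 ∨ ε = -1) {t : ℝ} (ht : t ≠ 0) : 0 < f' B ε t := by
  have h1 := sq_pos hB t
  have h2 := half_le_sq hB t
  have h3 : 0 < t^2 := by positivity
  rcases hε with rfl | rfl
  · rw [f']; positivity
  · rw [f']
    have : 0 < 2 * t^2 / sq B t := by positivity
    nlinarith

lemma continuous_f (hB : 0 < B) : Continuous (f B ε) :=
  continuous_iff_continuousAt.2 fun t => (hasDerivAt_f hB t).continuousAt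

lemma f_strictMono (hB : 0 < B) (hε : ε = 1 ∨ ε = -1) : StrictMono (f B ε) := by
  have key : ∀ s : Set ℝ, Convex ℝ s → interior s ⊆ {t : ℝ | t ≠ 0} → StrictMonoOn (f B ε) s := by
    intro s hs hsub
    apply strictMonoOn_of_deriv_pos hs ((continuous_f hB).continuousOn)
    intro t ht
    rw [(hasDerivAt_f hB t).deriv]
    exact f'_pos hB hε (hsub ht)
  have h1 : StrictMonoOn (f B ε) (Ici 0) := key _ (convex_Ici 0) (by
    rw [interior_Ici]; intro t ht; exact ne_of_gt ht)
  have h2 : StrictMonoOn (f B ε) (Iic 0) := key _ (convex_Iic 0) (by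
    rw [interior_Iic]; intro t ht; exact ne_of_lt ht)
  intro u v huv
  rcases le_total 0 u with hu | hu
  · exact h1 hu (hu.trans huv.le) huv
  · rcases le_total v 0 with hv | hv
    · exact h2 hu hv huv
    · have huv0 : u < 0 ∨ 0 < v := by
        rcases eq_or_lt_of_le hu with h | h
        · right; rwa [h] at huv
        · left; exact h
      have e1 : f B ε u ≤ f B ε 0 := by
        rcases eq_or_lt_of_le hu with h | h
        · rw [h]
        · exact (h2 (le_of_lt h) (le_refl (0:ℝ) : (0:ℝ) ∈ Iic 0) h).le
      have e2 : f B ε 0 ≤ f B ε v := by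
        rcases eq_or_lt_of_le hv with h | h
        · rw [← h]
        · exact (h1 (le_refl (0:ℝ) : (0:ℝ) ∈ Ici 0) (le_of_lt h) h).le
      rcases huv0 with h | h
      · exact lt_of_lt_of_le (h2 hu (le_refl (0:ℝ) : (0:ℝ) ∈ Iic 0) h) e2
      · exact lt_of_le_of_lt e1 (h1 (le_refl (0:ℝ) : (0:ℝ) ∈ Ici 0) h.le h)

lemma f_zero : f B ε 0 = 0 := by simp [f]

lemma f_surj (hB : 0 < B) (hε : ε = 1 ∨ ε = -1) : Function.Surjective (f B ε) := by
  have habs : |ε| = 1 := by rcases hε with rfl | rfl <;> simp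
  have hb : -B ≤ ε * B := by
    have : -(1:ℝ) ≤ ε := by rcases hε with rfl | rfl <;> norm_num
    nlinarith
  apply (continuous_f hB).surjective
  · apply tendsto_atTop_mono' _ _ tendsto_id
    filter_upwards [eventually_ge_atTop (max B 1)] with t ht
    have ht1 : (1:ℝ) ≤ t := le_trans (le_max_right B 1) ht
    have htB : B ≤ t := le_trans (le_max_left B 1) ht
    have hsq := le_sq hB t
    have hεB := hb
    show id t ≤ f B ε t
    rw [f_eq]; simp only [id]
    nlinarith
  · apply tendsto_atBot_mono' _ _ tendsto_id
    filter_upwards [eventually_le_atBot (-(max B 1))] with t ht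
    have ht1 : t ≤ -1 := le_trans ht (by simp [le_max_right])
    have htB : t ≤ -B := le_trans ht (by simp [le_max_left])
    have hsq : -t ≤ sq B t := by
      have : sq B t = sq B (-t) := by simp [sq]
      rw [this]; exact le_sq hB (-t)
    have hεB := hb
    show f B ε t ≤ id t
    rw [f_eq]; simp only [id]
    nlinarith


noncomputable def xinv (B ε : ℝ) : ℝ → ℝ := Function.invFun (f B ε)

variable {B ε : ℝ}

lemma f_xinv (hB : 0 < B) (hε : ε = 1 ∨ ε = -1) (a : ℝ) : f B ε (xinv B ε a) = a :=
  Function.invFun_eq (f_surj hB hε a)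

lemma xinv_f (hB : 0 < B) (hε : ε = 1 ∨ ε = -1) (t : ℝ) : xinv B ε (f B ε t) = t :=
  Function.leftInverse_invFun (f_strictMono hB hε).injective t

lemma xinv_eq_of_f_eq (hB : 0 < B) (hε : ε = 1 ∨ ε = -1) {t a : ℝ} (h : f B ε t = a) :
    xinv B ε a = t := by rw [← h, xinv_f hB hε]

lemma xinv_pos (hB : 0 < B) (hε : ε = 1 ∨ ε = -1) {a : ℝ} (ha : 0 < a) : 0 < xinv B ε a := by
  by_contra h
  push_neg at h
  have := (f_strictMono hB hε).monotone h
  rw [f_xinv hB hε, f_zero] at this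
  exact absurd (lt_of_lt_of_le ha this) (lt_irrefl 0)

lemma xinv_ne_zero (hB : 0 < B) (hε : ε = 1 ∨ ε = -1) {a : ℝ} (ha : a ≠ 0) : xinv B ε a ≠ 0 := by
  intro h
  apply ha
  rw [← f_xinv hB hε a, h, f_zero]

lemma continuous_xinv (hB : 0 < B) (hε : ε = 1 ∨ ε = -1) : Continuous (xinv B ε) := by
  have he : xinv B ε = ⇑(StrictMono.orderIsoOfSurjective _ (f_strictMono hB hε) (f_surj hB hε)).symm := by
    funext a
    apply (f_strictMono hB hε).injective
    rw [f_xinv hB hε,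
      StrictMono.orderIsoOfSurjective_self_symm_apply (f B ε) (f_strictMono hB hε) (f_surj hB hε) a]
  rw [he]
  exact OrderIso.continuous _

lemma hasDerivAt_xinv (hB : 0 < B) (hε : ε = 1 ∨ ε = -1) {a : ℝ} (ha : a ≠ 0) :
    HasDerivAt (xinv B ε) (f' B ε (xinv B ε a))⁻¹ a := by
  apply HasDerivAt.of_local_left_inverse ((continuous_xinv hB hε).continuousAt)
    (hasDerivAt_f hB _) (ne_of_gt (f'_pos hB hε (xinv_ne_zero hB hε ha)))
  exact Filter.Eventually.of_forall (f_xinv hB hε)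

/-- the integrand of `h` -/
noncomputable def ψ (B ε t : ℝ) : ℝ := (1 / 2 + ε * B / (4 * Real.sqrt (t ^ 2 + B ^ 2 / 4))) * t ^ 2

lemma ψ_eq (B ε t : ℝ) : ψ B ε t = (1/2 + ε * B / (4 * sq B t)) * t^2 := rfl


lemma f_eq' (B ε t : ℝ) : f B ε t = (2 * sq B t + ε * B) * t := rfl

lemma ψ_mul (hB : 0 < B) (t : ℝ) : ψ B ε t * (4 * sq B t) = (2*sq B t + ε*B) * t^2 := by
  have hsne : sq B t ≠ 0 := (sq_pos hB t).ne'
  rw [ψ_eq]; field_simp; ring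

lemma ψ_nonneg (hB : 0 < B) (hε : ε = 1 ∨ ε = -1) (t : ℝ) : 0 ≤ ψ B ε t := by
  have hs := sq_pos hB t
  have hsB := half_le_sq hB t
  have h1 : -(1:ℝ) ≤ ε := by rcases hε with rfl | rfl <;> norm_num
  have h2 : ε * B / (4 * sq B t) ≥ -(1/2) := by
    rw [ge_iff_le, le_div_iff₀ (by positivity)]
    nlinarith
  rw [ψ_eq]
  nlinarith [pow_two_nonneg t]

lemma key_y_le (hB : 0 < B) (hε : ε = 1 ∨ ε = -1) {a y : ℝ} (ha : 0 < a) (hy : 0 < y)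
    (heq : f B ε y = a) : y ≤ Real.sqrt a + B := by
  have hs := sq_pos hB y
  have hsy := le_sq hB y
  have hεB : -B ≤ ε * B := by
    have : -(1:ℝ) ≤ ε := by rcases hε with rfl | rfl <;> norm_num
    nlinarith
  rw [f_eq'] at heq
  by_contra hcon
  push_neg at hcon
  have hq := Real.sqrt_nonneg a
  have hqq : Real.sqrt a ^ 2 = a := Real.sq_sqrt ha.le
  have hyB : B < y := lt_of_le_of_lt (le_add_of_nonneg_left hq) hcon
  have hya : Real.sqrt a < y := lt_of_le_of_lt (le_add_of_nonneg_right hB.le) hcon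
  nlinarith [mul_pos (sub_pos.2 hyB) hy, mul_nonneg (sub_nonneg.2 hsy) hy.le,
    mul_nonneg (by nlinarith : (0:ℝ) ≤ ε*B + B) hy.le,
    mul_pos (sub_pos.2 hya) (by nlinarith : (0:ℝ) < y + Real.sqrt a)]

lemma key_sq_close (hB : 0 < B) (hε : ε = 1 ∨ ε = -1) {a y : ℝ} (ha : 0 < a) (hy : 0 < y)
    (heq : f B ε y = a) : |2*y^2 - a| ≤ 2*B*y := by
  have hs := sq_pos hB y
  have hsy := le_sq hB y
  have hsle := sq_le hB hy.le
  have hεB : -B ≤ ε * B ∧ ε * B ≤ B := by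
    constructor <;> (rcases hε with rfl | rfl <;> nlinarith)
  rw [f_eq'] at heq
  rw [abs_le]
  constructor <;> nlinarith [hεB.1, hεB.2]

lemma key_ratio (hB : 0 < B) (hε : ε = 1 ∨ ε = -1) {a y : ℝ} (ha : 0 < a) (hy : 0 < y)
    (heq : f B ε y = a) : ψ B ε y / f' B ε y ≤ (Real.sqrt a + B) / 2 := by
  have hs := sq_pos hB y
  have hs2 := sq_sq hB y
  have hsy := le_sq hB y
  have hsB := half_le_sq hB y
  have hsle := sq_le hB hy.le
  have hf' := f'_pos hB hε hy.ne'
  have hq := Real.sqrt_nonneg a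
  have hqy : y ≤ Real.sqrt a + B := key_y_le hB hε ha hy heq
  set s := sq B y with hsdef
  rw [div_le_div_iff₀ hf' two_pos]
  rcases hε with rfl | rfl
  · -- ε = 1
    have hψle : ψ B 1 y ≤ y^2 := by
      rw [ψ_eq]
      have h1 : (1:ℝ) * B / (4 * s) ≤ 1/2 := by
        rw [div_le_iff₀ (by positivity)]; nlinarith
      nlinarith [pow_two_nonneg y]
    have hf'ge : 2*y ≤ f' B 1 y := by
      rw [f']
      have : 0 ≤ 2 * y^2 / s := by positivity
      nlinarith
    nlinarith [mul_le_mul_of_nonneg_left hf'ge hy.le,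
      mul_le_mul_of_nonneg_right hqy hf'.le]
  · -- ε = -1
    have hid : (2*s - B) * (2*s + B) = 4*y^2 := by nlinarith
    have hden : (0:ℝ) < s*(2*s+B) := by nlinarith
    have hsne : s ≠ 0 := hs.ne'
    have e5 : f' B (-1) y * s = (2*s - B)*s + 2*y^2 := by
      rw [f', ← hsdef]; field_simp [hsne]; ring
    have e6 : f' B (-1) y * (s*(2*s+B)) = y^2*(8*s+2*B) := by
      linear_combination (2*s+B)*e5 + s*hid
    have e1 : ψ B (-1) y * (4*s) = (2*s - B) * y^2 := by
      have := ψ_mul (ε := (-1:ℝ)) hB y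
      rw [← hsdef] at this
      linear_combination this
    have hψ : ψ B (-1) y = y^4/(s*(2*s+B)) := by
      rw [eq_div_iff hden.ne']
      linear_combination ((2*s+B)/4)*e1 + (y^2/4)*hid
    rw [hψ, div_mul_eq_mul_div, div_le_iff₀ hden, mul_assoc, e6]
    nlinarith [mul_le_mul_of_nonneg_right hqy
        (by nlinarith : (0:ℝ) ≤ y^2*(8*s+2*B)),
      mul_le_mul_of_nonneg_left (by nlinarith : 2*y ≤ 8*s+2*B)
        (by positivity : (0:ℝ) ≤ y*y^2)]


/-! ### Section 4: limits as B → 0⁺ -/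

lemma tendsto_ratio {ε : ℝ} (hε : ε = 1 ∨ ε = -1) {a : ℝ} (ha : 0 < a) {y : ℝ → ℝ}
    (hy : ∀ B, 0 < B → 0 < y B) (hfy : ∀ B, 0 < B → f B ε (y B) = a) :
    Tendsto (fun B => ψ B ε (y B) / f' B ε (y B)) (𝓝[>] (0:ℝ))
      (𝓝 (Real.sqrt (a/2) / 8)) := by
  set l := 𝓝[>] (0:ℝ)
  have hBpos : ∀ᶠ B in l, (0:ℝ) < B := self_mem_nhdsWithin
  have tB : Tendsto (fun B : ℝ => B) l (𝓝 0) := tendsto_id.mono_left nhdsWithin_le_nhds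
  have hq : (0:ℝ) < Real.sqrt (a/2) := Real.sqrt_pos.2 (by linarith)
  set m := Real.sqrt (a/2) with hm
  have hm2 : m^2 = a/2 := Real.sq_sqrt (by linarith)
  -- squeeze for y²
  have hub : Tendsto (fun B : ℝ => B*(Real.sqrt a + B)) l (𝓝 0) := by
    have := tB.mul (tendsto_const_nhds.add tB : Tendsto (fun B : ℝ => Real.sqrt a + B) l (𝓝 (Real.sqrt a + 0)))
    simpa using this
  have t1 : Tendsto (fun B => (y B)^2) l (𝓝 (a/2)) := by
    apply tendsto_of_tendsto_of_tendsto_of_le_of_le'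
      (g := fun B : ℝ => a/2 - B*(Real.sqrt a + B))
      (h := fun B : ℝ => a/2 + B*(Real.sqrt a + B))
    · simpa using (tendsto_const_nhds.sub hub : Tendsto (fun B : ℝ => a/2 - B*(Real.sqrt a + B)) l (𝓝 (a/2 - 0)))
    · simpa using (tendsto_const_nhds.add hub : Tendsto (fun B : ℝ => a/2 + B*(Real.sqrt a + B)) l (𝓝 (a/2 + 0)))
    · filter_upwards [hBpos] with B hB
      have h1 := key_sq_close hB hε ha (hy B hB) (hfy B hB)
      have h2 := key_y_le hB hε ha (hy B hB) (hfy B hB)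
      have h3 := abs_le.1 h1
      nlinarith [(hy B hB).le, h3.1, h3.2]
    · filter_upwards [hBpos] with B hB
      have h1 := key_sq_close hB hε ha (hy B hB) (hfy B hB)
      have h2 := key_y_le hB hε ha (hy B hB) (hfy B hB)
      have h3 := abs_le.1 h1
      nlinarith [(hy B hB).le, h3.1, h3.2]
  have t2 : Tendsto (fun B => y B) l (𝓝 m) := by
    have h := (Real.continuous_sqrt.tendsto (a/2)).comp t1
    rw [show Real.sqrt (a/2) = m from rfl] at h
    apply h.congr'
    filter_upwards [hBpos] with B hB
    exact Real.sqrt_sq (hy B hB).le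
  have t3 : Tendsto (fun B => sq B (y B)) l (𝓝 m) := by
    have harg : Tendsto (fun B => (y B)^2 + B^2/4) l (𝓝 (a/2)) := by
      have : Tendsto (fun B : ℝ => B^2/4) l (𝓝 0) := by
        have := (tB.mul tB).div_const 4
        simpa [pow_two] using this
      simpa using t1.add this
    have h := (Real.continuous_sqrt.tendsto (a/2)).comp harg
    exact h
  have tψ : Tendsto (fun B => ψ B ε (y B)) l (𝓝 (a/4)) := by
    have hεB : Tendsto (fun B : ℝ => ε*B) l (𝓝 0) := by
      simpa using tB.const_mul ε
    have hden : Tendsto (fun B => 4 * sq B (y B)) l (𝓝 (4*m)) := t3.const_mul 4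
    have hfrac : Tendsto (fun B => ε*B / (4 * sq B (y B))) l (𝓝 0) := by
      have := hεB.div hden (by positivity)
      rw [zero_div] at this; exact this
    have : Tendsto (fun B => (1/2 + ε*B / (4*sq B (y B))) * (y B)^2) l (𝓝 ((1/2 + 0) * (a/2))) :=
      (tendsto_const_nhds.add hfrac).mul t1
    have heq : ∀ B, ψ B ε (y B) = (1/2 + ε*B / (4*sq B (y B))) * (y B)^2 := fun B => ψ_eq B ε (y B)
    rw [show ((1:ℝ)/2 + 0) * (a/2) = a/4 by ring] at this
    exact Tendsto.congr (fun B => (heq B).symm) this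
  have tf' : Tendsto (fun B => f' B ε (y B)) l (𝓝 (4*m)) := by
    have hεB : Tendsto (fun B : ℝ => ε*B) l (𝓝 0) := by simpa using tB.const_mul ε
    have h1 : Tendsto (fun B => 2 * sq B (y B)) l (𝓝 (2*m)) := t3.const_mul 2
    have h2 : Tendsto (fun B => 2 * (y B)^2 / sq B (y B)) l (𝓝 (2*(a/2)/m)) :=
      (t1.const_mul 2).div t3 hq.ne'
    have := (h1.add hεB).add h2
    have harith : 2*m + 0 + 2*(a/2)/m = 4*m := by
      field_simp
      nlinarith [hm2]
    rw [harith] at this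
    exact this.congr (fun B => rfl)
  have := tψ.div tf' (by positivity)
  have harith2 : a/4 / (4*m) = m/8 := by
    rw [div_eq_div_iff (by positivity) (by norm_num)]
    nlinarith [hm2]
  rw [harith2] at this
  exact this

/-- the explicit value of `g B ε` at `s`, in terms of the inverse function -/
noncomputable def gv (γ B ε s : ℝ) : ℝ :=
  ψ B ε (xinv B ε (Real.pi/(γ*s))) / (4*γ*s^2 * f' B ε (xinv B ε (Real.pi/(γ*s))))

noncomputable def W (γ B s : ℝ) : ℝ := gv γ B 1 s + gv γ B (-1) s

lemma gv_eq (γ B ε s : ℝ) :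
    gv γ B ε s = (ψ B ε (xinv B ε (Real.pi/(γ*s))) / f' B ε (xinv B ε (Real.pi/(γ*s)))) / (4*γ*s^2) := by
  rw [gv, div_div]; ring_nf

lemma a_pos {γ s : ℝ} (hγ : 0 < γ) (hs : 0 < s) : 0 < Real.pi/(γ*s) := by
  have := Real.pi_pos
  positivity

lemma gv_nonneg {γ B ε s : ℝ} (hB : 0 < B) (hε : ε = 1 ∨ ε = -1) (hγ : 0 < γ) (hs : 0 < s) :
    0 ≤ gv γ B ε s := by
  have h1 := ψ_nonneg hB hε (xinv B ε (Real.pi/(γ*s)))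
  have h2 := f'_pos hB hε (xinv_ne_zero hB hε (a_pos hγ hs).ne')
  rw [gv]
  positivity

lemma gv_le {γ B ε s : ℝ} (hB : 0 < B) (hε : ε = 1 ∨ ε = -1) (hγ : 0 < γ) (hs : 0 < s) :
    gv γ B ε s ≤ (Real.sqrt (Real.pi/(γ*s)) + B) / (8*γ*s^2) := by
  have ha := a_pos hγ hs
  have hy := xinv_pos hB hε ha
  have hr := key_ratio hB hε ha hy (f_xinv hB hε _)
  rw [gv_eq]
  calc (ψ B ε (xinv B ε (Real.pi/(γ*s))) / f' B ε (xinv B ε (Real.pi/(γ*s)))) / (4*γ*s^2)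
      ≤ ((Real.sqrt (Real.pi/(γ*s)) + B)/2) / (4*γ*s^2) := by gcongr
    _ = (Real.sqrt (Real.pi/(γ*s)) + B) / (8*γ*s^2) := by
        rw [div_div]; ring_nf

lemma tendsto_gv {γ ε s : ℝ} (hε : ε = 1 ∨ ε = -1) (hγ : 0 < γ) (hs : 0 < s) :
    Tendsto (fun B => gv γ B ε s) (𝓝[>] (0:ℝ))
      (𝓝 ((Real.sqrt (Real.pi/(γ*s)/2) / 8) / (4*γ*s^2))) := by
  have ha := a_pos hγ hs
  have h := (tendsto_ratio hε ha (y := fun B => xinv B ε (Real.pi/(γ*s)))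
      (fun B hB => xinv_pos hB hε ha) (fun B hB => f_xinv hB hε _)).div_const (4*γ*s^2)
  exact h.congr (fun B => (gv_eq γ B ε s).symm)

noncomputable def WL (γ s : ℝ) : ℝ := Real.sqrt (Real.pi/(γ*s)/2) / (16*γ*s^2)

lemma tendsto_W {γ s : ℝ} (hγ : 0 < γ) (hs : 0 < s) :
    Tendsto (fun B => W γ B s) (𝓝[>] (0:ℝ)) (𝓝 (WL γ s)) := by
  have h := (tendsto_gv (Or.inl rfl) hγ hs).add (tendsto_gv (Or.inr rfl) hγ hs)
  have : (Real.sqrt (Real.pi/(γ*s)/2) / 8) / (4*γ*s^2)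
      + (Real.sqrt (Real.pi/(γ*s)/2) / 8) / (4*γ*s^2) = WL γ s := by
    rw [WL, div_div, div_div]
    ring
  rw [this] at h
  exact h


/-! ### Section 5: the explicit formula for `g` -/

lemma continuous_ψ {B ε : ℝ} (hB : 0 < B) : Continuous (ψ B ε) := by
  have hc1 : Continuous (fun t : ℝ => Real.sqrt (t^2 + B^2/4)) := continuous_sq hB
  have hne : ∀ t : ℝ, (4:ℝ) * Real.sqrt (t^2 + B^2/4) ≠ 0 := by
    intro t
    have := sq_pos hB t
    rw [sq] at this
    positivity
  exact ((continuous_const.add ((continuous_const).div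
    (continuous_const.mul hc1) hne)).mul (continuous_pow 2))

lemma g_formula {γ B ε : ℝ} (hγ : 0 < γ) (hB : 0 < B) (hε : ε = 1 ∨ ε = -1)
    (x h g : ℝ → ℝ)
    (hx : ∀ r : ℝ, r ≠ 0 → f B ε (x r) = Real.pi / (γ * r))
    (hh : ∀ r : ℝ, r ≠ 0 → h r = (1/(4*Real.pi)) *
      (if 0 < r then ∫ t in (0:ℝ)..(x r), ψ B ε t else ∫ t in (x r)..(0:ℝ), ψ B ε t))
    (hg : ∀ r : ℝ, r ≠ 0 → g r = if 0 < r then -(deriv h r) else deriv h r)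
    {s : ℝ} (hs : 0 < s) : g s = gv γ B ε s := by
  have hπ : (0:ℝ) < Real.pi := Real.pi_pos
  have ha : 0 < Real.pi/(γ*s) := a_pos hγ hs
  have hxs : x s = xinv B ε (Real.pi/(γ*s)) := (xinv_eq_of_f_eq hB hε (hx s hs.ne')).symm
  have hf'pos := f'_pos hB hε (xinv_ne_zero hB hε ha.ne')
  -- derivative of r ↦ π/(γr)
  have hA : HasDerivAt (fun r : ℝ => Real.pi/(γ*r)) (-(Real.pi/(γ*s^2))) s := by
    have h0 : HasDerivAt (fun r : ℝ => r⁻¹) (-(↑s^2)⁻¹) s := hasDerivAt_inv hs.ne'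
    have h1 := h0.const_mul (Real.pi/γ)
    have heqf : (fun r : ℝ => Real.pi/γ * r⁻¹) = (fun r : ℝ => Real.pi/(γ*r)) := by
      funext r; rw [← div_eq_mul_inv, div_div]
    have heqd : Real.pi/γ * -(↑s^2)⁻¹ = -(Real.pi/(γ*s^2)) := by
      rw [mul_neg, ← div_eq_mul_inv, div_div]
    rw [heqf, heqd] at h1
    exact h1
  -- derivative of x
  have hXd : HasDerivAt x ((f' B ε (xinv B ε (Real.pi/(γ*s))))⁻¹ * -(Real.pi/(γ*s^2))) s := by
    have hcomp := (hasDerivAt_xinv hB hε ha.ne').comp s hA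
    apply hcomp.congr_of_eventuallyEq
    filter_upwards [Ioi_mem_nhds hs] with r hr
    exact (xinv_eq_of_f_eq hB hε (hx r (ne_of_gt hr))).symm
  -- FTC
  have ψc := continuous_ψ (ε := ε) hB
  have hI : HasDerivAt (fun u : ℝ => ∫ t in (0:ℝ)..u, ψ B ε t) (ψ B ε (x s)) (x s) :=
    intervalIntegral.integral_hasDerivAt_right (ψc.intervalIntegrable _ _)
      (ψc.stronglyMeasurableAtFilter _ _) ψc.continuousAt
  have hIx := hI.comp s hXd
  have hhd : HasDerivAt h ((1/(4*Real.pi)) *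
      (ψ B ε (x s) * ((f' B ε (xinv B ε (Real.pi/(γ*s))))⁻¹ * -(Real.pi/(γ*s^2))))) s := by
    have h2 := hIx.const_mul (1/(4*Real.pi))
    apply h2.congr_of_eventuallyEq
    filter_upwards [Ioi_mem_nhds hs] with r hr
    rw [hh r (ne_of_gt hr), if_pos (show (0:ℝ) < r from hr)]
    rfl
  rw [hg s hs.ne', if_pos hs, hhd.deriv, hxs, gv]
  have hsne : s ≠ 0 := hs.ne'
  field_simp


/-! ### Section 6: the inner integral -/

lemma W_nonneg {γ B s : ℝ} (hB : 0 < B) (hγ : 0 < γ) (hs : 0 < s) : 0 ≤ W γ B s :=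
  add_nonneg (gv_nonneg hB (Or.inl rfl) hγ hs) (gv_nonneg hB (Or.inr rfl) hγ hs)

lemma W_le {γ B s : ℝ} (hB : 0 < B) (hγ : 0 < γ) (hs : 0 < s) :
    W γ B s ≤ (Real.sqrt (Real.pi/(γ*s)) + B)/(4*γ*s^2) := by
  have h1 := gv_le hB (Or.inl rfl) hγ hs
  have h2 := gv_le hB (Or.inr rfl) hγ hs
  rw [W]
  have : (Real.sqrt (Real.pi/(γ*s)) + B)/(8*γ*s^2) + (Real.sqrt (Real.pi/(γ*s)) + B)/(8*γ*s^2)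
      = (Real.sqrt (Real.pi/(γ*s)) + B)/(4*γ*s^2) := by
    rw [← add_div]; ring_nf
  linarith

lemma continuous_f' {B ε : ℝ} (hB : 0 < B) : Continuous (f' B ε) := by
  have hc1 : Continuous (sq B) := continuous_sq hB
  have hne : ∀ t : ℝ, sq B t ≠ 0 := fun t => (sq_pos hB t).ne'
  exact ((continuous_const.mul hc1).add continuous_const).add
    ((continuous_const.mul (continuous_pow 2)).div hc1 hne)

lemma continuousOn_gv {γ B ε : ℝ} (hγ : 0 < γ) (hB : 0 < B) (hε : ε = 1 ∨ ε = -1) :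
    ContinuousOn (gv γ B ε) (Ioi 0) := by
  have hA : ContinuousOn (fun s : ℝ => Real.pi/(γ*s)) (Ioi 0) := by
    apply ContinuousOn.div continuousOn_const (continuous_const.mul continuous_id).continuousOn
    intro s hs
    have : (0:ℝ) < s := hs
    exact mul_ne_zero hγ.ne' this.ne'
  have hxc : ContinuousOn (fun s : ℝ => xinv B ε (Real.pi/(γ*s))) (Ioi 0) :=
    (continuous_xinv hB hε).comp_continuousOn hA
  have num : ContinuousOn (fun s : ℝ => ψ B ε (xinv B ε (Real.pi/(γ*s)))) (Ioi 0) :=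
    (continuous_ψ hB).comp_continuousOn hxc
  have den : ContinuousOn (fun s : ℝ => 4*γ*s^2 * f' B ε (xinv B ε (Real.pi/(γ*s)))) (Ioi 0) := by
    apply ContinuousOn.mul
    · exact ((continuous_const.mul (continuous_pow 2)) : Continuous fun s : ℝ => 4*γ*s^2).continuousOn
    · exact (continuous_f' hB).comp_continuousOn hxc
  apply num.div den
  intro s hs
  have hspos : (0:ℝ) < s := hs
  have := f'_pos hB hε (xinv_ne_zero hB hε (a_pos hγ hspos).ne')
  positivity

lemma continuousOn_W {γ B : ℝ} (hγ : 0 < γ) (hB : 0 < B) : ContinuousOn (W γ B) (Ioi 0) :=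
  (continuousOn_gv hγ hB (Or.inl rfl)).add (continuousOn_gv hγ hB (Or.inr rfl))

noncomputable def d1 (γ r : ℝ) : ℝ := Real.sqrt (1/(2*γ*r)) / (16*γ*Real.pi^2*r^2)
noncomputable def d2 (γ r : ℝ) : ℝ := 1/(16*γ*Real.pi^2*r^2)
noncomputable def Mi (γ r τ : ℝ) : ℝ := Real.exp (-τ) * (d1 γ r * (Real.sqrt τ * τ) + d2 γ r * τ)
noncomputable def Fi (γ B r τ : ℝ) : ℝ := Real.exp (-τ) * τ⁻¹ * W γ B (2*Real.pi*r/τ)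
noncomputable def K (γ B r : ℝ) : ℝ := ∫ τ in Ioi (0:ℝ), Fi γ B r τ
noncomputable def KL (γ r : ℝ) : ℝ := ∫ τ in Ioi (0:ℝ),
  Real.exp (-τ) * τ⁻¹ * WL γ (2*Real.pi*r/τ)

lemma spos {r τ : ℝ} (hr : 0 < r) (hτ : 0 < τ) : 0 < 2*Real.pi*r/τ := by
  have := Real.pi_pos; positivity

lemma Fi_nonneg {γ B r τ : ℝ} (hγ : 0 < γ) (hB : 0 < B) (hr : 0 < r) (hτ : 0 < τ) :
    0 ≤ Fi γ B r τ := by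
  have := W_nonneg hB hγ (spos hr hτ)
  rw [Fi]
  positivity

lemma Fi_le_Mi {γ B r τ : ℝ} (hγ : 0 < γ) (hB : 0 < B) (hB1 : B ≤ 1) (hr : 0 < r) (hτ : 0 < τ) :
    Fi γ B r τ ≤ Mi γ r τ := by
  have hπ := Real.pi_pos
  have hs := spos hr hτ
  have h1 := W_le hB hγ hs
  have h2 : Fi γ B r τ ≤ Real.exp (-τ) * τ⁻¹ *
      ((Real.sqrt (Real.pi/(γ*(2*Real.pi*r/τ))) + B)/(4*γ*(2*Real.pi*r/τ)^2)) := by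
    rw [Fi]
    apply mul_le_mul_of_nonneg_left h1 (by positivity)
  have EQa : Real.pi/(γ*(2*Real.pi*r/τ)) = τ/(2*γ*r) := by
    field_simp
  have EQb : Real.sqrt (τ/(2*γ*r)) = Real.sqrt τ * Real.sqrt (1/(2*γ*r)) := by
    rw [show τ/(2*γ*r) = τ*(1/(2*γ*r)) by ring, Real.sqrt_mul hτ.le]
  rw [EQa, EQb] at h2
  have EQc : Real.exp (-τ) * τ⁻¹ *
      ((Real.sqrt τ * Real.sqrt (1/(2*γ*r)) + B)/(4*γ*(2*Real.pi*r/τ)^2))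
      = Real.exp (-τ) * (d1 γ r * (Real.sqrt τ * τ) + (B/(16*γ*Real.pi^2*r^2)) * τ) := by
    rw [d1]
    field_simp
    ring
  rw [EQc] at h2
  apply h2.trans
  rw [Mi, d2]
  have hsq := Real.sqrt_nonneg τ
  have hBd : B/(16*γ*Real.pi^2*r^2) ≤ 1/(16*γ*Real.pi^2*r^2) := by gcongr
  have hd1 : 0 ≤ d1 γ r := by rw [d1]; positivity
  gcongr

lemma int_exp_sqrt : IntegrableOn (fun τ : ℝ => Real.exp (-τ) * (Real.sqrt τ * τ)) (Ioi 0) := by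
  have h := Real.GammaIntegral_convergent (show (0:ℝ) < 5/2 by norm_num)
  apply h.congr_fun _ measurableSet_Ioi
  intro x hx
  have hx' : (0:ℝ) < x := hx
  show Real.exp (-x) * x ^ ((5:ℝ)/2 - 1) = Real.exp (-x) * (Real.sqrt x * x)
  rw [show (5:ℝ)/2 - 1 = 1/2 + 1 by norm_num, Real.rpow_add hx', Real.rpow_one,
    ← Real.sqrt_eq_rpow]

lemma int_exp_lin : IntegrableOn (fun τ : ℝ => Real.exp (-τ) * τ) (Ioi 0) := by
  have h := Real.GammaIntegral_convergent (show (0:ℝ) < 2 by norm_num)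
  apply h.congr_fun _ measurableSet_Ioi
  intro x hx
  show Real.exp (-x) * x ^ ((2:ℝ) - 1) = Real.exp (-x) * x
  norm_num

noncomputable def I1 : ℝ := ∫ τ in Ioi (0:ℝ), Real.exp (-τ) * (Real.sqrt τ * τ)
noncomputable def I2 : ℝ := ∫ τ in Ioi (0:ℝ), Real.exp (-τ) * τ

lemma Mi_eq (γ r : ℝ) : Mi γ r = fun τ =>
    d1 γ r * (Real.exp (-τ) * (Real.sqrt τ * τ)) + d2 γ r * (Real.exp (-τ) * τ) := by
  funext τ; rw [Mi]; ring

lemma integrable_Mi (γ r : ℝ) : IntegrableOn (Mi γ r) (Ioi 0) := by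
  rw [Mi_eq]
  exact (int_exp_sqrt.const_mul _).add (int_exp_lin.const_mul _)

lemma integral_Mi (γ r : ℝ) : ∫ τ in Ioi (0:ℝ), Mi γ r τ = d1 γ r * I1 + d2 γ r * I2 := by
  rw [Mi_eq]
  rw [integral_add (int_exp_sqrt.const_mul _) (int_exp_lin.const_mul _),
    integral_const_mul, integral_const_mul, I1, I2]

lemma continuousOn_Fi {γ B r : ℝ} (hγ : 0 < γ) (hB : 0 < B) (hr : 0 < r) :
    ContinuousOn (Fi γ B r) (Ioi 0) := by
  apply ContinuousOn.mul
  · exact ((Real.continuous_exp.comp continuous_neg).continuousOn).mul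
      (continuousOn_inv₀.mono (by intro τ hτ; exact ne_of_gt hτ))
  · apply (continuousOn_W hγ hB).comp
    · apply ContinuousOn.div continuousOn_const continuousOn_id
      intro τ hτ; exact ne_of_gt hτ
    · intro τ hτ
      exact spos hr hτ

lemma aesm_Fi {γ B r : ℝ} (hγ : 0 < γ) (hB : 0 < B) (hr : 0 < r) :
    AEStronglyMeasurable (Fi γ B r) (volume.restrict (Ioi 0)) :=
  (continuousOn_Fi hγ hB hr).aestronglyMeasurable measurableSet_Ioi

lemma K_nonneg {γ B r : ℝ} (hγ : 0 < γ) (hB : 0 < B) (hr : 0 < r) : 0 ≤ K γ B r :=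
  setIntegral_nonneg measurableSet_Ioi (fun τ hτ => Fi_nonneg hγ hB hr hτ)

lemma K_le {γ B r : ℝ} (hγ : 0 < γ) (hB : 0 < B) (hB1 : B ≤ 1) (hr : 0 < r) :
    K γ B r ≤ d1 γ r * I1 + d2 γ r * I2 := by
  rw [← integral_Mi γ r, K]
  apply integral_mono_of_nonneg
  · rw [EventuallyLE, ae_restrict_iff' measurableSet_Ioi]
    exact Eventually.of_forall (fun τ hτ => Fi_nonneg hγ hB hr hτ)
  · exact integrable_Mi γ r
  · rw [EventuallyLE, ae_restrict_iff' measurableSet_Ioi]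
    exact Eventually.of_forall (fun τ hτ => Fi_le_Mi hγ hB hB1 hr hτ)

lemma tendsto_K {γ r : ℝ} (hγ : 0 < γ) (hr : 0 < r) :
    Tendsto (fun B => K γ B r) (𝓝[>] (0:ℝ)) (𝓝 (KL γ r)) := by
  apply tendsto_integral_filter_of_dominated_convergence (Mi γ r)
  · filter_upwards [self_mem_nhdsWithin] with B hB
    exact aesm_Fi hγ hB hr
  · filter_upwards [Ioc_mem_nhdsGT zero_lt_one] with B hB
    rw [ae_restrict_iff' measurableSet_Ioi]
    apply Eventually.of_forall
    intro τ hτ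
    rw [Real.norm_eq_abs, abs_of_nonneg (Fi_nonneg hγ hB.1 hr hτ)]
    exact Fi_le_Mi hγ hB.1 hB.2 hr hτ
  · exact integrable_Mi γ r
  · rw [ae_restrict_iff' measurableSet_Ioi]
    apply Eventually.of_forall
    intro τ hτ
    exact (tendsto_W hγ (spos hr hτ)).const_mul _


/-! ### Section 7: the outer integral -/

lemma aesm_K {γ B : ℝ} (hγ : 0 < γ) (hB : 0 < B) :
    AEStronglyMeasurable (K γ B) (volume.restrict (Ioi 0)) := by
  have hcont : ContinuousOn (fun q : ℝ × ℝ => Real.exp (-q.2) * q.2⁻¹ * W γ B (2*Real.pi*q.1/q.2))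
      ((Ioi (0:ℝ)) ×ˢ (Ioi (0:ℝ))) := by
    have hsne : ∀ q : ℝ × ℝ, q ∈ (Ioi (0:ℝ)) ×ˢ (Ioi (0:ℝ)) → q.2 ≠ 0 :=
      fun q hq => ne_of_gt hq.2
    apply ContinuousOn.mul
    · exact ((Real.continuous_exp.comp continuous_snd.neg).continuousOn).mul
        (continuous_snd.continuousOn.inv₀ hsne)
    · apply (continuousOn_W hγ hB).comp
      · exact ((continuous_const.mul continuous_fst).continuousOn).div
          continuous_snd.continuousOn hsne
      · intro q hq
        exact spos hq.1 hq.2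
  have hprod : AEStronglyMeasurable
      (fun q : ℝ × ℝ => Real.exp (-q.2) * q.2⁻¹ * W γ B (2*Real.pi*q.1/q.2))
      ((volume.restrict (Ioi 0)).prod (volume.restrict (Ioi 0))) := by
    rw [Measure.prod_restrict]
    exact hcont.aestronglyMeasurable (measurableSet_Ioi.prod measurableSet_Ioi)
  exact hprod.integral_prod_right'

lemma I1_nonneg : 0 ≤ I1 := by
  apply setIntegral_nonneg measurableSet_Ioi
  intro τ hτ
  have : (0:ℝ) < τ := hτ
  positivity

lemma I2_nonneg : 0 ≤ I2 := by
  apply setIntegral_nonneg measurableSet_Ioi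
  intro τ hτ
  have : (0:ℝ) < τ := hτ
  positivity

lemma d1_nonneg {γ r : ℝ} (hγ : 0 < γ) (hr : 0 < r) : 0 ≤ d1 γ r := by
  rw [d1]; positivity

lemma d2_nonneg {γ r : ℝ} (hγ : 0 < γ) (hr : 0 < r) : 0 ≤ d2 γ r := by
  rw [d2]; positivity

lemma cos_bound (u : ℝ) : |Real.cos u - 1| ≤ min 2 (u^2/2) := by
  have h1 := Real.cos_le_one u
  have h2 := Real.neg_one_le_cos u
  have h3 := Real.one_sub_sq_div_two_le_cos (x := u)
  rw [abs_of_nonpos (by linarith)]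
  apply le_min <;> linarith

noncomputable def Mo (γ p r : ℝ) : ℝ := min 2 (p^2*r^2/2) * (d1 γ r * I1 + d2 γ r * I2)

lemma Go_bound {γ B p r : ℝ} (hγ : 0 < γ) (hB : 0 < B) (hB1 : B ≤ 1) (hr : 0 < r) :
    ‖(Real.cos (p*r) - 1) * K γ B r‖ ≤ Mo γ p r := by
  rw [norm_mul, Real.norm_eq_abs, Real.norm_eq_abs, Mo,
    abs_of_nonneg (K_nonneg hγ hB hr)]
  have h1 : |Real.cos (p*r) - 1| ≤ min 2 (p^2*r^2/2) := by
    have := cos_bound (p*r)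
    rw [mul_pow] at this
    exact this
  exact mul_le_mul h1 (K_le hγ hB hB1 hr) (K_nonneg hγ hB hr)
    (le_trans (abs_nonneg _) h1)

lemma Mo_nonneg {γ p r : ℝ} (hγ : 0 < γ) (hr : 0 < r) : 0 ≤ Mo γ p r := by
  rw [Mo]
  have h1 : (0:ℝ) ≤ min 2 (p^2*r^2/2) := le_min (by norm_num) (by positivity)
  have := d1_nonneg hγ hr
  have := d2_nonneg hγ hr
  have := I1_nonneg
  have := I2_nonneg
  positivity

lemma continuousOn_Mo {γ p : ℝ} (hγ : 0 < γ) : ContinuousOn (Mo γ p) (Ioi 0) := by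
  have hne : ∀ r : ℝ, r ∈ Ioi (0:ℝ) → 16*γ*Real.pi^2*r^2 ≠ 0 := by
    intro r hr
    have : (0:ℝ) < r := hr
    have := Real.pi_pos
    positivity
  apply ContinuousOn.mul
  · exact (continuous_const.min (by continuity)).continuousOn
  · apply ContinuousOn.add
    · apply ContinuousOn.mul _ continuousOn_const
      apply ContinuousOn.div _ _ hne
      · apply Real.continuous_sqrt.comp_continuousOn
        apply ContinuousOn.div continuousOn_const (continuous_const.mul continuous_id).continuousOn
        intro r hr
        have : (0:ℝ) < r := hr
        show 2*γ*r ≠ 0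
        positivity
      · exact (by continuity : Continuous fun r : ℝ => 16*γ*Real.pi^2*r^2).continuousOn
    · exact (ContinuousOn.div continuousOn_const
        ((by continuity : Continuous fun r : ℝ => 16*γ*Real.pi^2*r^2).continuousOn) hne).mul
        continuousOn_const

lemma int_inv_sqrt : IntegrableOn (fun r : ℝ => Real.sqrt (1/r)) (Ioc (0:ℝ) 1) := by
  have h : IntervalIntegrable (fun x : ℝ => x ^ (-(1:ℝ)/2)) volume 0 1 :=
    intervalIntegral.intervalIntegrable_rpow' (by norm_num)
  rw [intervalIntegrable_iff_integrableOn_Ioc_of_le zero_le_one] at h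
  apply h.congr_fun _ measurableSet_Ioc
  intro r hr
  have hr' : (0:ℝ) < r := hr.1
  show r ^ (-(1:ℝ)/2) = Real.sqrt (1/r)
  rw [show -(1:ℝ)/2 = -(1/2) by norm_num, Real.rpow_neg hr'.le, ← Real.sqrt_eq_rpow,
    ← Real.sqrt_inv, one_div]

lemma sqrt_split {γ r : ℝ} (hγ : 0 < γ) (hr : 0 < r) :
    Real.sqrt (1/(2*γ*r)) = Real.sqrt (1/(2*γ)) * Real.sqrt (1/r) := by
  rw [← Real.sqrt_mul (by positivity)]
  congr 1
  field_simp

lemma integrable_Mo {γ : ℝ} (hγ : 0 < γ) (p : ℝ) : IntegrableOn (Mo γ p) (Ioi 0) := by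
  have hπ := Real.pi_pos
  rw [← Ioc_union_Ioi_eq_Ioi (zero_le_one (α := ℝ))]
  apply IntegrableOn.union
  · -- on Ioc 0 1
    apply Integrable.mono'
      (g := fun r => (p^2/2) * ((I1 * (Real.sqrt (1/(2*γ)) / (16*γ*Real.pi^2))) * Real.sqrt (1/r)
        + I2 * (1/(16*γ*Real.pi^2))))
    · apply Integrable.const_mul
      exact (int_inv_sqrt.const_mul _).add (integrableOn_const ((by
        rw [Real.volume_Ioc]; exact ENNReal.ofReal_ne_top)))
    · exact ((continuousOn_Mo hγ).mono Ioc_subset_Ioi_self).aestronglyMeasurable measurableSet_Ioc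
    · rw [ae_restrict_iff' measurableSet_Ioc]
      apply Eventually.of_forall
      intro r hr
      have hr' : (0:ℝ) < r := hr.1
      rw [Real.norm_eq_abs, abs_of_nonneg (Mo_nonneg hγ hr')]
      have hD : 0 ≤ d1 γ r * I1 + d2 γ r * I2 := by
        have := d1_nonneg hγ hr'
        have := d2_nonneg hγ hr'
        have := I1_nonneg
        have := I2_nonneg
        positivity
      calc Mo γ p r ≤ (p^2*r^2/2) * (d1 γ r * I1 + d2 γ r * I2) :=
            mul_le_mul_of_nonneg_right (min_le_right _ _) hD
        _ = (p^2/2) * ((I1 * (Real.sqrt (1/(2*γ)) / (16*γ*Real.pi^2))) * Real.sqrt (1/r)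
            + I2 * (1/(16*γ*Real.pi^2))) := by
            rw [d1, d2, sqrt_split hγ hr']
            field_simp
  · -- on Ioi 1
    apply Integrable.mono'
      (g := fun r => (2 * (I1 * (Real.sqrt (1/(2*γ)) / (16*γ*Real.pi^2))
        + I2 * (1/(16*γ*Real.pi^2)))) * (r^2)⁻¹)
    · apply Integrable.const_mul
      have h := (integrableOn_Ioi_rpow_iff (zero_lt_one (α := ℝ))).2
        (show (-2:ℝ) < -1 by norm_num)
      apply h.congr_fun _ measurableSet_Ioi
      intro x hx
      have hx' : (0:ℝ) < x := lt_trans zero_lt_one hx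
      show x ^ (-2:ℝ) = (x^2)⁻¹
      rw [show (-2:ℝ) = -((2:ℕ):ℝ) by norm_num, Real.rpow_neg hx'.le, Real.rpow_natCast]
    · exact ((continuousOn_Mo hγ).mono (Ioi_subset_Ioi zero_le_one)).aestronglyMeasurable
        measurableSet_Ioi
    · rw [ae_restrict_iff' measurableSet_Ioi]
      apply Eventually.of_forall
      intro r hr
      have hr1 : (1:ℝ) < r := hr
      have hr' : (0:ℝ) < r := lt_trans zero_lt_one hr1
      rw [Real.norm_eq_abs, abs_of_nonneg (Mo_nonneg hγ hr')]
      have hsq1 : Real.sqrt (1/r) ≤ 1 := by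
        rw [show (1:ℝ) = Real.sqrt 1 by rw [Real.sqrt_one]]
        apply Real.sqrt_le_sqrt
        rw [Real.sqrt_one]
        rw [div_le_one hr']
        linarith
      calc Mo γ p r ≤ 2 * (d1 γ r * I1 + d2 γ r * I2) :=
            mul_le_mul_of_nonneg_right (min_le_left _ _) (by
              have := d1_nonneg hγ hr'
              have := d2_nonneg hγ hr'
              have := I1_nonneg
              have := I2_nonneg
              positivity)
        _ ≤ (2 * (I1 * (Real.sqrt (1/(2*γ)) / (16*γ*Real.pi^2))
            + I2 * (1/(16*γ*Real.pi^2)))) * (r^2)⁻¹ := by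
            have e1 : d1 γ r = (Real.sqrt (1/(2*γ)) * Real.sqrt (1/r) / (16*γ*Real.pi^2)) * (r^2)⁻¹ := by
              rw [d1, sqrt_split hγ hr']
              field_simp
            have e2 : d2 γ r = (1/(16*γ*Real.pi^2)) * (r^2)⁻¹ := by
              rw [d2]
              field_simp
            rw [e1, e2]
            have hu : (0:ℝ) ≤ (r^2)⁻¹ := by positivity
            have hs2 : (0:ℝ) ≤ Real.sqrt (1/r) := Real.sqrt_nonneg _
            have hs1 : (0:ℝ) ≤ Real.sqrt (1/(2*γ)) := Real.sqrt_nonneg _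
            have hI1 := I1_nonneg
            have hc : (0:ℝ) < 16*γ*Real.pi^2 := by positivity
            calc 2 * (Real.sqrt (1/(2*γ)) * Real.sqrt (1/r) / (16*γ*Real.pi^2) * (r^2)⁻¹ * I1
                  + 1/(16*γ*Real.pi^2) * (r^2)⁻¹ * I2)
                ≤ 2 * (Real.sqrt (1/(2*γ)) / (16*γ*Real.pi^2) * (r^2)⁻¹ * I1
                  + 1/(16*γ*Real.pi^2) * (r^2)⁻¹ * I2) := by
                  apply mul_le_mul_of_nonneg_left _ (by norm_num : (0:ℝ) ≤ 2)
                  apply add_le_add_left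
                  apply mul_le_mul_of_nonneg_right _ hI1
                  apply mul_le_mul_of_nonneg_right _ hu
                  apply (div_le_div_iff_of_pos_right hc).2
                  nlinarith
              _ = (2 * (I1 * (Real.sqrt (1/(2*γ)) / (16*γ*Real.pi^2))
                  + I2 * (1/(16*γ*Real.pi^2)))) * (r^2)⁻¹ := by ring


lemma tendsto_outer {γ : ℝ} (hγ : 0 < γ) (p : ℝ) :
    Tendsto (fun B => ∫ r in Ioi (0:ℝ), (Real.cos (p*r) - 1) * K γ B r) (𝓝[>] (0:ℝ))
      (𝓝 (∫ r in Ioi (0:ℝ), (Real.cos (p*r) - 1) * KL γ r)) := by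
  apply tendsto_integral_filter_of_dominated_convergence (Mo γ p)
  · filter_upwards [self_mem_nhdsWithin] with B hB
    exact (((Real.continuous_cos.comp (continuous_const.mul continuous_id)).sub
      continuous_const).aestronglyMeasurable.restrict).mul (aesm_K hγ hB)
  · filter_upwards [Ioc_mem_nhdsGT zero_lt_one] with B hB
    rw [ae_restrict_iff' measurableSet_Ioi]
    apply Eventually.of_forall
    intro r hr
    exact Go_bound hγ hB.1 hB.2 hr
  · exact integrable_Mo hγ p
  · rw [ae_restrict_iff' measurableSet_Ioi]
    apply Eventually.of_forall
    intro r hr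
    exact (tendsto_K hγ hr).const_mul _


/-! ### Section 8: evaluation of the limit -/

noncomputable def Af (γ : ℝ) : ℝ := Real.sqrt (1/(4*γ)) * I1 / (64*γ*Real.pi^2)

lemma KL_eq {γ r : ℝ} (hγ : 0 < γ) (hr : 0 < r) :
    KL γ r = Af γ * (Real.sqrt (1/r) / r^2) := by
  have hπ := Real.pi_pos
  have h1 : ∀ τ ∈ Ioi (0:ℝ), Real.exp (-τ) * τ⁻¹ * WL γ (2*Real.pi*r/τ)
      = (Real.sqrt (1/(4*γ*r)) / (64*γ*Real.pi^2*r^2)) * (Real.exp (-τ) * (Real.sqrt τ * τ)) := by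
    intro τ hτ
    have hτ' : (0:ℝ) < τ := hτ
    have EQa : Real.pi/(γ*(2*Real.pi*r/τ))/2 = τ/(4*γ*r) := by
      field_simp
      ring
    have EQb : Real.sqrt (τ/(4*γ*r)) = Real.sqrt τ * Real.sqrt (1/(4*γ*r)) := by
      rw [show τ/(4*γ*r) = τ*(1/(4*γ*r)) by ring, Real.sqrt_mul hτ'.le]
    rw [WL, EQa, EQb]
    field_simp
    ring
  rw [KL, setIntegral_congr_fun measurableSet_Ioi h1, integral_const_mul]
  have h2 : Real.sqrt (1/(4*γ*r)) = Real.sqrt (1/(4*γ)) * Real.sqrt (1/r) := by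
    rw [← Real.sqrt_mul (by positivity)]
    congr 1
    field_simp
  rw [h2, Af, show (∫ τ in Ioi (0:ℝ), Real.exp (-τ) * (Real.sqrt τ * τ)) = I1 from rfl]
  field_simp

lemma int_inv_sq : IntegrableOn (fun x : ℝ => (x^2)⁻¹) (Ioi 1) := by
  have h := (integrableOn_Ioi_rpow_iff (zero_lt_one (α := ℝ))).2 (show (-2:ℝ) < -1 by norm_num)
  apply h.congr_fun _ measurableSet_Ioi
  intro x hx
  have hx' : (0:ℝ) < x := lt_trans zero_lt_one hx
  show x ^ (-2:ℝ) = (x^2)⁻¹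
  rw [show (-2:ℝ) = -((2:ℕ):ℝ) by norm_num, Real.rpow_neg hx'.le, Real.rpow_natCast]

lemma continuousOn_Jint : ContinuousOn (fun u : ℝ => (1 - Real.cos u) * (Real.sqrt (1/u)/u^2))
    (Ioi 0) := by
  apply ContinuousOn.mul
  · exact (continuous_const.sub Real.continuous_cos).continuousOn
  · apply ContinuousOn.div
    · apply Real.continuous_sqrt.comp_continuousOn
      apply ContinuousOn.div continuousOn_const continuousOn_id
      intro u hu; exact ne_of_gt hu
    · exact (continuous_pow 2).continuousOn
    · intro u hu
      have : (0:ℝ) < u := hu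
      positivity

lemma Jint_nonneg {u : ℝ} (hu : 0 < u) : 0 ≤ (1 - Real.cos u) * (Real.sqrt (1/u)/u^2) := by
  have h1 := Real.cos_le_one u
  have h2 : (0:ℝ) ≤ Real.sqrt (1/u) := Real.sqrt_nonneg _
  have h3 : (0:ℝ) < u^2 := by positivity
  apply mul_nonneg (by linarith)
  positivity

lemma integrable_Jint : IntegrableOn (fun u : ℝ => (1 - Real.cos u) * (Real.sqrt (1/u)/u^2))
    (Ioi 0) := by
  rw [← Ioc_union_Ioi_eq_Ioi (zero_le_one (α := ℝ))]
  apply IntegrableOn.union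
  · apply Integrable.mono' (g := fun u => (1/2) * Real.sqrt (1/u))
    · exact int_inv_sqrt.const_mul _
    · exact (continuousOn_Jint.mono Ioc_subset_Ioi_self).aestronglyMeasurable measurableSet_Ioc
    · rw [ae_restrict_iff' measurableSet_Ioc]
      apply Eventually.of_forall
      intro u hu
      have hu' : (0:ℝ) < u := hu.1
      rw [Real.norm_eq_abs, abs_of_nonneg (Jint_nonneg hu')]
      have h3 := Real.one_sub_sq_div_two_le_cos (x := u)
      have h4 : (0:ℝ) ≤ Real.sqrt (1/u) := Real.sqrt_nonneg _
      calc (1 - Real.cos u) * (Real.sqrt (1/u)/u^2) ≤ (u^2/2) * (Real.sqrt (1/u)/u^2) := by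
            apply mul_le_mul_of_nonneg_right (by linarith) (by positivity)
        _ = (1/2) * Real.sqrt (1/u) := by field_simp
  · apply Integrable.mono' (g := fun u => 2 * (u^2)⁻¹)
    · exact int_inv_sq.const_mul _
    · exact (continuousOn_Jint.mono (Ioi_subset_Ioi zero_le_one)).aestronglyMeasurable
        measurableSet_Ioi
    · rw [ae_restrict_iff' measurableSet_Ioi]
      apply Eventually.of_forall
      intro u hu
      have hu1 : (1:ℝ) < u := hu
      have hu' : (0:ℝ) < u := lt_trans zero_lt_one hu1
      rw [Real.norm_eq_abs, abs_of_nonneg (Jint_nonneg hu')]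
      have h1 := Real.neg_one_le_cos u
      have hsq1 : Real.sqrt (1/u) ≤ 1 := by
        rw [show (1:ℝ) = Real.sqrt 1 by rw [Real.sqrt_one]]
        apply Real.sqrt_le_sqrt
        rw [Real.sqrt_one, div_le_one hu']
        linarith
      have h4 : (0:ℝ) ≤ Real.sqrt (1/u) := Real.sqrt_nonneg _
      calc (1 - Real.cos u) * (Real.sqrt (1/u)/u^2) ≤ 2 * (Real.sqrt (1/u)/u^2) := by
            apply mul_le_mul_of_nonneg_right (by linarith) (by positivity)
        _ ≤ 2 * (1/u^2) := by
            apply mul_le_mul_of_nonneg_left _ (by norm_num)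
            apply div_le_div_of_nonneg_right hsq1 (by positivity) |>.trans_eq
            rfl
        _ = 2 * (u^2)⁻¹ := by rw [one_div]
  
noncomputable def J : ℝ := ∫ u in Ioi (0:ℝ), (1 - Real.cos u) * (Real.sqrt (1/u)/u^2)

lemma J_pos : 0 < J := by
  have hπ := Real.pi_pos
  have hsub : Icc (Real.pi/2) Real.pi ⊆ Ioi (0:ℝ) := by
    intro u hu
    have := hu.1
    show (0:ℝ) < u
    linarith
  have hmono : ∫ u in Icc (Real.pi/2) Real.pi, (1 - Real.cos u) * (Real.sqrt (1/u)/u^2) ≤ J := by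
    apply setIntegral_mono_set integrable_Jint
    · rw [EventuallyLE, ae_restrict_iff' measurableSet_Ioi]
      refine Eventually.of_forall (fun u hu => ?_)
      simpa using Jint_nonneg hu
    · exact Eventually.of_forall hsub
  have hconst : Real.sqrt (1/Real.pi)/Real.pi^2 * (volume (Icc (Real.pi/2) Real.pi)).toReal
      ≤ ∫ u in Icc (Real.pi/2) Real.pi, (1 - Real.cos u) * (Real.sqrt (1/u)/u^2) := by
    apply setIntegral_ge_of_const_le_real measurableSet_Icc
    · rw [Real.volume_Icc]; exact ENNReal.ofReal_ne_top
    · intro u hu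
      have hu2 : Real.pi/2 ≤ u := hu.1
      have huπ : u ≤ Real.pi := hu.2
      have hu' : (0:ℝ) < u := lt_of_lt_of_le (by linarith) hu2
      have hcos : Real.cos u ≤ 0 :=
        Real.cos_nonpos_of_pi_div_two_le_of_le hu2 (by linarith)
      have h5 : Real.sqrt (1/Real.pi) ≤ Real.sqrt (1/u) := by
        apply Real.sqrt_le_sqrt
        apply div_le_div_of_nonneg_left one_pos.le hu' huπ |>.trans_eq rfl
      calc Real.sqrt (1/Real.pi)/Real.pi^2 ≤ Real.sqrt (1/u)/u^2 := by
            apply div_le_div₀ (Real.sqrt_nonneg _) h5 (by positivity)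
            nlinarith
        _ ≤ (1 - Real.cos u) * (Real.sqrt (1/u)/u^2) := by
            have hX : (0:ℝ) ≤ Real.sqrt (1/u)/u^2 := by positivity
            nlinarith [mul_nonneg (by linarith : (0:ℝ) ≤ -Real.cos u) hX]
    · exact integrable_Jint.mono_set hsub
  apply lt_of_lt_of_le _ (hconst.trans hmono)
  rw [Real.volume_Icc]
  have : (0:ℝ) < Real.pi - Real.pi/2 := by linarith
  rw [ENNReal.toReal_ofReal this.le]
  positivity

lemma I1_pos : 0 < I1 := by
  have hsub : Icc (1:ℝ) 2 ⊆ Ioi (0:ℝ) := by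
    intro u hu
    have := hu.1
    show (0:ℝ) < u
    linarith
  have hmono : ∫ τ in Icc (1:ℝ) 2, Real.exp (-τ) * (Real.sqrt τ * τ) ≤ I1 := by
    apply setIntegral_mono_set int_exp_sqrt
    · rw [EventuallyLE, ae_restrict_iff' measurableSet_Ioi]
      refine Eventually.of_forall (fun τ hτ => ?_)
      have h0 : (0:ℝ) < τ := hτ
      simp only [Pi.zero_apply]
      positivity
    · exact Eventually.of_forall hsub
  have hconst : Real.exp (-2) * (volume (Icc (1:ℝ) 2)).toReal
      ≤ ∫ τ in Icc (1:ℝ) 2, Real.exp (-τ) * (Real.sqrt τ * τ) := by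
    apply setIntegral_ge_of_const_le_real measurableSet_Icc
    · rw [Real.volume_Icc]; exact ENNReal.ofReal_ne_top
    · intro τ hτ
      have h1 : (1:ℝ) ≤ τ := hτ.1
      have h2 : τ ≤ 2 := hτ.2
      have hsq : (1:ℝ) ≤ Real.sqrt τ := by
        rw [show (1:ℝ) = Real.sqrt 1 by rw [Real.sqrt_one]]
        exact Real.sqrt_le_sqrt h1
      have hexp : Real.exp (-2) ≤ Real.exp (-τ) := Real.exp_le_exp.2 (by linarith)
      have hexp0 : (0:ℝ) < Real.exp (-τ) := Real.exp_pos _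
      have hst : (1:ℝ) ≤ Real.sqrt τ * τ := by nlinarith [Real.sqrt_nonneg τ]
      nlinarith [mul_le_mul_of_nonneg_left hst hexp0.le]
    · exact int_exp_sqrt.mono_set hsub
  apply lt_of_lt_of_le _ (hconst.trans hmono)
  rw [Real.volume_Icc]
  rw [ENNReal.toReal_ofReal (by norm_num : (0:ℝ) ≤ 2 - 1)]
  have := Real.exp_pos (-2:ℝ)
  nlinarith

lemma cov {q : ℝ} (hq : 0 < q) :
    ∫ r in Ioi (0:ℝ), (1 - Real.cos (q*r)) * (Real.sqrt (1/r)/r^2)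
      = q * Real.sqrt q * J := by
  have h := integral_comp_mul_left_Ioi (fun u => (1 - Real.cos u) * (Real.sqrt (1/u)/u^2)) 0 hq
  rw [mul_zero] at h
  have h1 : ∀ r ∈ Ioi (0:ℝ), (1 - Real.cos (q*r)) * (Real.sqrt (1/r)/r^2)
      = (q^2 * Real.sqrt q) * ((1 - Real.cos (q*r)) * (Real.sqrt (1/(q*r))/(q*r)^2)) := by
    intro r hr
    have hr' : (0:ℝ) < r := hr
    have e1 : Real.sqrt (1/r) = Real.sqrt q * Real.sqrt (1/(q*r)) := by
      rw [← Real.sqrt_mul hq.le]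
      congr 1
      field_simp
    rw [e1]
    field_simp
  rw [setIntegral_congr_fun measurableSet_Ioi h1, integral_const_mul, h, smul_eq_mul, ← J]
  have hsq : (0:ℝ) < Real.sqrt q := Real.sqrt_pos.2 hq
  field_simp

noncomputable def c₀ : ℝ := I1 * J / (64*Real.pi^2)

lemma c₀_pos : 0 < c₀ := by
  have := Real.pi_pos
  have := I1_pos
  have := J_pos
  rw [c₀]
  positivity

lemma sqrt4γ {γ : ℝ} (hγ : 0 < γ) : Real.sqrt (1/(4*γ)) = 1/(2*Real.sqrt γ) := by
  rw [one_div, Real.sqrt_inv, show (4:ℝ)*γ = 2^2*γ by norm_num, Real.sqrt_mul (by positivity),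
    Real.sqrt_sq (by norm_num : (0:ℝ) ≤ 2), one_div]

lemma rpow32 {t : ℝ} (ht : 0 < t) : t ^ ((3:ℝ)/2) = t * Real.sqrt t := by
  rw [show (3:ℝ)/2 = 1 + 1/2 by norm_num, Real.rpow_add ht, Real.rpow_one, ← Real.sqrt_eq_rpow]

lemma final_const {γ p : ℝ} (hγ : 0 < γ) (hp : p ≠ 0) :
    2 * -(Af γ * (|p| * Real.sqrt |p| * J)) =
      -c₀ * γ ^ (-(3 / 2) : ℝ) * |p| ^ ((3 : ℝ) / 2) := by
  have hπ := Real.pi_pos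
  have hap : 0 < |p| := abs_pos.2 hp
  have hsγ : (0:ℝ) < Real.sqrt γ := Real.sqrt_pos.2 hγ
  have h1 : γ ^ (-(3 / 2) : ℝ) = (γ * Real.sqrt γ)⁻¹ := by
    rw [show (-(3/2) : ℝ) = -((3:ℝ)/2) by norm_num, Real.rpow_neg hγ.le, rpow32 hγ]
  rw [h1, rpow32 hap, Af, sqrt4γ hγ, c₀]
  have hγ2 : γ * Real.sqrt γ ≠ 0 := by positivity
  field_simp

lemma final_eval {γ p : ℝ} (hγ : 0 < γ) (hp : p ≠ 0) :
    2 * ∫ r in Ioi (0:ℝ), (Real.cos (p*r) - 1) * KL γ r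
      = -c₀ * γ ^ (-(3 / 2) : ℝ) * |p| ^ ((3 : ℝ) / 2) := by
  have h1 : ∀ r ∈ Ioi (0:ℝ), (Real.cos (p*r) - 1) * KL γ r
      = (-(Af γ)) * ((1 - Real.cos (|p| * r)) * (Real.sqrt (1/r)/r^2)) := by
    intro r hr
    have hr' : (0:ℝ) < r := hr
    have e1 : Real.cos (|p| * r) = Real.cos (p*r) := by
      rw [show |p| * r = |p * r| by rw [abs_mul, abs_of_nonneg hr'.le], Real.cos_abs]
    rw [KL_eq hγ hr', e1]
    ring
  rw [setIntegral_congr_fun measurableSet_Ioi h1, integral_const_mul, cov (abs_pos.2 hp),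
    ← final_const hγ hp]
  ring

end Stmt16







/-- There is a constant `c₀ > 0`, independent of `γ`, such that for every
`γ > 0` and every `p ∈ ℝ`, `Φ_B(p) → -c₀·γ^(-3/2)·|p|^(3/2)` as `B → 0⁺`.  Here, for each
`γ > 0`, the families `x_{B,±}`, `h_{B,±}`, `g_{B,±}` and the Lévy exponent `Φ_B` are
characterized by the hypotheses below. -/
theorem stmt_16 :
    ∃ c₀ : ℝ, 0 < c₀ ∧
      ∀ γ : ℝ, 0 < γ →
        ∀ (x h g : ℝ → ℝ → ℝ → ℝ) (Φ : ℝ → ℝ → ℝ),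
          (∀ B : ℝ, 0 < B → ∀ ε : ℝ, (ε = 1 ∨ ε = -1) → ∀ r : ℝ, r ≠ 0 →
            (2 * Real.sqrt (x B ε r ^ 2 + B ^ 2 / 4) + ε * B) * x B ε r =
              Real.pi / (γ * r)) →
          (∀ B : ℝ, 0 < B → ∀ ε : ℝ, (ε = 1 ∨ ε = -1) → ∀ r : ℝ, r ≠ 0 →
            h B ε r = (1 / (4 * Real.pi)) *
              (if 0 < r then
                ∫ t in (0 : ℝ)..(x B ε r),
                  (1 / 2 + ε * B / (4 * Real.sqrt (t ^ 2 + B ^ 2 / 4))) * t ^ 2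
               else
                ∫ t in (x B ε r)..(0 : ℝ),
                  (1 / 2 + ε * B / (4 * Real.sqrt (t ^ 2 + B ^ 2 / 4))) * t ^ 2)) →
          (∀ B : ℝ, 0 < B → ∀ ε : ℝ, (ε = 1 ∨ ε = -1) → ∀ r : ℝ, r ≠ 0 →
            g B ε r = if 0 < r then -(deriv (h B ε) r) else deriv (h B ε) r) →
          (∀ B : ℝ, 0 < B → ∀ p : ℝ,
            Φ B p = 2 * ∫ r in Set.Ioi (0 : ℝ), (Real.cos (p * r) - 1) *
              ∫ τ in Set.Ioi (0 : ℝ), Real.exp (-τ) * τ⁻¹ *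
                (g B 1 (2 * Real.pi * r / τ) + g B (-1) (2 * Real.pi * r / τ))) →
          ∀ p : ℝ,
            Tendsto (fun B => Φ B p) (𝓝[>] 0)
              (𝓝 (-c₀ * γ ^ (-(3 / 2) : ℝ) * |p| ^ ((3 : ℝ) / 2))) := by
  refine ⟨Stmt16.c₀, Stmt16.c₀_pos, ?_⟩
  intro γ hγ x h g Φ hx hh hg hΦ p
  have hrep : ∀ B : ℝ, 0 < B →
      Φ B p = 2 * ∫ r in Set.Ioi (0:ℝ), (Real.cos (p*r) - 1) * Stmt16.K γ B r := by
    intro B hB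
    rw [hΦ B hB p]
    congr 1
    apply MeasureTheory.setIntegral_congr_fun measurableSet_Ioi
    intro r hr
    have hr' : (0:ℝ) < r := hr
    show (Real.cos (p*r) - 1) * (∫ τ in Set.Ioi (0:ℝ), Real.exp (-τ) * τ⁻¹ *
        (g B 1 (2 * Real.pi * r / τ) + g B (-1) (2 * Real.pi * r / τ)))
      = (Real.cos (p*r) - 1) * Stmt16.K γ B r
    congr 1
    apply MeasureTheory.setIntegral_congr_fun measurableSet_Ioi
    intro τ hτ
    have hτ' : (0:ℝ) < τ := hτ
    have hs := Stmt16.spos hr' hτ'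
    have h1 : g B 1 (2*Real.pi*r/τ) = Stmt16.gv γ B 1 (2*Real.pi*r/τ) :=
      Stmt16.g_formula hγ hB (Or.inl rfl) (x B 1) (h B 1) (g B 1)
        (fun r hr => hx B hB 1 (Or.inl rfl) r hr)
        (fun r hr => hh B hB 1 (Or.inl rfl) r hr)
        (fun r hr => hg B hB 1 (Or.inl rfl) r hr) hs
    have h2 : g B (-1) (2*Real.pi*r/τ) = Stmt16.gv γ B (-1) (2*Real.pi*r/τ) :=
      Stmt16.g_formula hγ hB (Or.inr rfl) (x B (-1)) (h B (-1)) (g B (-1))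
        (fun r hr => hx B hB (-1) (Or.inr rfl) r hr)
        (fun r hr => hh B hB (-1) (Or.inr rfl) r hr)
        (fun r hr => hg B hB (-1) (Or.inr rfl) r hr) hs
    show Real.exp (-τ) * τ⁻¹ * (g B 1 (2*Real.pi*r/τ) + g B (-1) (2*Real.pi*r/τ))
      = Stmt16.Fi γ B r τ
    rw [h1, h2]
    rfl
  have hmain : Tendsto (fun B => 2 * ∫ r in Set.Ioi (0:ℝ), (Real.cos (p*r) - 1) * Stmt16.K γ B r)
      (𝓝[>] (0:ℝ))
      (𝓝 (2 * ∫ r in Set.Ioi (0:ℝ), (Real.cos (p*r) - 1) * Stmt16.KL γ r)) :=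
    (Stmt16.tendsto_outer hγ p).const_mul 2
  have hcongr : Tendsto (fun B => Φ B p) (𝓝[>] (0:ℝ))
      (𝓝 (2 * ∫ r in Set.Ioi (0:ℝ), (Real.cos (p*r) - 1) * Stmt16.KL γ r)) := by
    apply hmain.congr'
    filter_upwards [self_mem_nhdsWithin] with B hB
    exact (hrep B hB).symm
  rcases eq_or_ne p 0 with rfl | hp
  · have hval : (2:ℝ) * ∫ r in Set.Ioi (0:ℝ), (Real.cos ((0:ℝ)*r) - 1) * Stmt16.KL γ r = 0 := by
      simp
    have htarget : -Stmt16.c₀ * γ ^ (-(3 / 2) : ℝ) * |(0:ℝ)| ^ ((3 : ℝ) / 2) = 0 := by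
      rw [abs_zero, Real.zero_rpow (by norm_num : ((3:ℝ)/2) ≠ 0), mul_zero]
    rw [htarget]
    rw [hval] at hcongr
    exact hcongr
  · rw [← Stmt16.final_eval hγ hp]
    exact hcongr
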